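/- Let I, J, K be three subsets of {1,...,n} with I ∩ J = ∅ and K = I^c ∩ J^c = (I ∪ J)^c, so |I| + |J| + |K| = n. Then for the operator L̃₂ acting on the pure-spinor basis: (i) if |K| ∉ {0, 2} then L̃₂(e_I·v_I, e_J·v_I) · e_K·v_I = 0; (ii) if |K| = 0 then L̃₂(e_I·v_I, e_J·v_I) · e_K·v_I = B(e_I·v_I, e_J·v_I)(|I| − n/2) v_I; (iii) if K = {a, b} (ordered b then a) then L̃₂(e_I·v_I, e_J·v_I) · e_K·v_I = 2 B(e_a e_b e_I·v_I, e_J·v_I) v_I. -/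

import Mathlib

open CliffordAlgebra

/-- The ordered product `e_{p₁} ⋯ e_{p_k}` in the Clifford algebra, for a
subset `P = {p₁ < ⋯ < p_k}` of `{1, …, n}`. -/
def prodE {k V : Type*} [Field k] [AddCommGroup V] [Module k V] {n : ℕ}
    (Q : QuadraticForm k V) (eB : Fin n → V) (P : Finset (Fin n)) :
    CliffordAlgebra Q :=
  ((P.sort (· ≤ ·)).map fun p => ι Q (eB p)).prod


namespace Stmt16Aux

variable {k V S : Type*} [Field k] [AddCommGroup V] [Module k V]
  [AddCommGroup S] [Module k S] {n : ℕ}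
  (Q : QuadraticForm k V) (eB iB : Fin n → V)
  (ρ : CliffordAlgebra Q ≃ₐ[k] Module.End k S) (v0 : S)

/-- ordered product of e's over a list -/
def pl (l : List (Fin n)) : CliffordAlgebra Q := (l.map fun p => ι Q (eB p)).prod

lemma pl_nil : pl Q eB ([] : List (Fin n)) = 1 := rfl

lemma pl_cons (a : Fin n) (l : List (Fin n)) :
    pl Q eB (a :: l) = ι Q (eB a) * pl Q eB l := by simp [pl]

lemma mem_mul_pl (hEE : ∀ a b, ι Q (eB a) * ι Q (eB b) = -(ι Q (eB b) * ι Q (eB a)))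
    (hE2 : ∀ a, ι Q (eB a) * ι Q (eB a) = 0)
    {a : Fin n} {l : List (Fin n)} (h : a ∈ l) :
    ι Q (eB a) * pl Q eB l = 0 := by
  induction l with
  | nil => simp at h
  | cons b t ih =>
    rw [pl_cons, ← mul_assoc]
    rcases eq_or_ne a b with rfl | hab
    · rw [hE2, zero_mul]
    · rw [hEE a b, neg_mul, mul_assoc, ih (by simpa [hab] using h), mul_zero, neg_zero]

lemma not_nodup_pl (hEE : ∀ a b, ι Q (eB a) * ι Q (eB b) = -(ι Q (eB b) * ι Q (eB a)))
    (hE2 : ∀ a, ι Q (eB a) * ι Q (eB a) = 0)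
    {l : List (Fin n)} (h : ¬ l.Nodup) : pl Q eB l = 0 := by
  induction l with
  | nil => simp at h
  | cons b t ih =>
    rw [pl_cons]
    by_cases hbt : b ∈ t
    · exact mem_mul_pl Q eB hEE hE2 hbt
    · rw [ih (by simp [List.nodup_cons, hbt] at h; exact h), mul_zero]

/-- spinor obtained by acting with an ordered e-product on v0 -/
def sp (l : List (Fin n)) : S := ρ (pl Q eB l) v0

lemma sp_nil : sp Q eB ρ v0 ([] : List (Fin n)) = v0 := by
  simp [sp, pl_nil]

lemma sp_cons (a : Fin n) (l : List (Fin n)) :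
    sp Q eB ρ v0 (a :: l) = ρ (ι Q (eB a)) (sp Q eB ρ v0 l) := by
  simp [sp, pl_cons, map_mul, Module.End.mul_apply]

lemma i_sp_eq_zero (hv0 : ∀ a, ρ (ι Q (iB a)) v0 = 0)
    (hIEb : ∀ (a b : Fin n) (x : S), ρ (ι Q (iB a)) (ρ (ι Q (eB b)) x)
      = (if a = b then x else 0) - ρ (ι Q (eB b)) (ρ (ι Q (iB a)) x))
    {a : Fin n} {l : List (Fin n)} (h : a ∉ l) :
    ρ (ι Q (iB a)) (sp Q eB ρ v0 l) = 0 := by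
  induction l with
  | nil => rw [sp_nil]; exact hv0 a
  | cons b t ih =>
    have hab : a ≠ b := by intro h'; exact h (h' ▸ List.mem_cons_self)
    have hat : a ∉ t := fun h' => h (List.mem_cons_of_mem _ h')
    rw [sp_cons, hIEb, if_neg hab, ih hat, map_zero, zero_sub, neg_zero]

lemma i_sp_erase (hv0 : ∀ a, ρ (ι Q (iB a)) v0 = 0)
    (hIEb : ∀ (a b : Fin n) (x : S), ρ (ι Q (iB a)) (ρ (ι Q (eB b)) x)
      = (if a = b then x else 0) - ρ (ι Q (eB b)) (ρ (ι Q (iB a)) x))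
    {a : Fin n} {l : List (Fin n)} (hn : l.Nodup) (h : a ∈ l) :
    ∃ c : k, ρ (ι Q (iB a)) (sp Q eB ρ v0 l) = c • sp Q eB ρ v0 (l.erase a) := by
  induction l with
  | nil => simp at h
  | cons b t ih =>
    rcases eq_or_ne a b with rfl | hab
    · refine ⟨1, ?_⟩
      have hat : a ∉ t := (List.nodup_cons.mp hn).1
      rw [sp_cons, hIEb, if_pos rfl, i_sp_eq_zero Q eB iB ρ v0 hv0 hIEb hat,
        map_zero, sub_zero, List.erase_cons_head, one_smul]
    · have hat : a ∈ t := by simpa [hab] using h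
      obtain ⟨c, hc⟩ := ih (List.nodup_cons.mp hn).2 hat
      refine ⟨-c, ?_⟩
      rw [sp_cons, hIEb, if_neg hab, hc, map_smul,
        List.erase_cons_tail (by simp [hab.symm]), sp_cons, zero_sub, neg_smul]

lemma B_shift (B : S →ₗ[k] S →ₗ[k] k)
    (hB : ∀ (v : V) (φ ψ : S), B (ρ (ι Q v) φ) ψ = B φ (ρ (ι Q v) ψ))
    (l₁ l₂ : List (Fin n)) :
    B (sp Q eB ρ v0 l₁) (sp Q eB ρ v0 l₂) = B v0 (sp Q eB ρ v0 (l₁.reverse ++ l₂)) := by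
  induction l₁ generalizing l₂ with
  | nil => rw [sp_nil]; simp
  | cons a t ih =>
    rw [sp_cons, hB, ← sp_cons, ih (a :: l₂)]
    simp

lemma B_v0_missing (B : S →ₗ[k] S →ₗ[k] k)
    (hB : ∀ (v : V) (φ ψ : S), B (ρ (ι Q v) φ) ψ = B φ (ρ (ι Q v) ψ))
    (hv0 : ∀ a, ρ (ι Q (iB a)) v0 = 0)
    (hIEb : ∀ (a b : Fin n) (x : S), ρ (ι Q (iB a)) (ρ (ι Q (eB b)) x)
      = (if a = b then x else 0) - ρ (ι Q (eB b)) (ρ (ι Q (iB a)) x))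
    {l : List (Fin n)} (m : Fin n) (h : m ∉ l) :
    B v0 (sp Q eB ρ v0 l) = 0 := by
  have h1 : sp Q eB ρ v0 l = ρ (ι Q (iB m)) (sp Q eB ρ v0 (m :: l)) := by
    rw [sp_cons, hIEb, if_pos rfl, i_sp_eq_zero Q eB iB ρ v0 hv0 hIEb h, map_zero, sub_zero]
  rw [h1, ← hB, hv0]
  simp

lemma B_sp_missing (B : S →ₗ[k] S →ₗ[k] k)
    (hB : ∀ (v : V) (φ ψ : S), B (ρ (ι Q v) φ) ψ = B φ (ρ (ι Q v) ψ))
    (hv0 : ∀ a, ρ (ι Q (iB a)) v0 = 0)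
    (hIEb : ∀ (a b : Fin n) (x : S), ρ (ι Q (iB a)) (ρ (ι Q (eB b)) x)
      = (if a = b then x else 0) - ρ (ι Q (eB b)) (ρ (ι Q (iB a)) x))
    {l₁ l₂ : List (Fin n)} (m : Fin n) (h1 : m ∉ l₁) (h2 : m ∉ l₂) :
    B (sp Q eB ρ v0 l₁) (sp Q eB ρ v0 l₂) = 0 := by
  rw [B_shift Q eB ρ v0 B hB]
  exact B_v0_missing Q eB iB ρ v0 B hB hv0 hIEb m (by simp [h1, h2])

lemma B_sp_dup (B : S →ₗ[k] S →ₗ[k] k)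
    (hB : ∀ (v : V) (φ ψ : S), B (ρ (ι Q v) φ) ψ = B φ (ρ (ι Q v) ψ))
    (hEE : ∀ a b, ι Q (eB a) * ι Q (eB b) = -(ι Q (eB b) * ι Q (eB a)))
    (hE2 : ∀ a, ι Q (eB a) * ι Q (eB a) = 0)
    {l₁ l₂ : List (Fin n)} (h : ¬ (l₁ ++ l₂).Nodup) :
    B (sp Q eB ρ v0 l₁) (sp Q eB ρ v0 l₂) = 0 := by
  rw [B_shift Q eB ρ v0 B hB]
  have hperm : (l₁.reverse ++ l₂).Perm (l₁ ++ l₂) := (l₁.reverse_perm).append_right l₂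
  have h0 : pl Q eB (l₁.reverse ++ l₂) = 0 :=
    not_nodup_pl Q eB hEE hE2 (fun hn => h (hperm.nodup_iff.mp hn))
  simp [sp, h0]

end Stmt16Aux
set_option maxHeartbeats 1000000 in
theorem stmt16 {k V S : Type*} [Field k] [AddCommGroup V] [Module k V]
    [FiniteDimensional k V] [AddCommGroup S] [Module k S] [FiniteDimensional k S]
    (n : ℕ)
    (g : LinearMap.BilinForm k V) (Q : QuadraticForm k V)
    (h2 : (2 : k) ≠ 0)
    (hsymm : ∀ v w, g v w = g w v)
    (hdimV : Module.finrank k V = 2 * n)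
    (hQ : ∀ v, Q v = g v v)
    -- a polarisation with dual bases
    (iB eB : Fin n → V)
    (hii : ∀ a b, g (iB a) (iB b) = 0)
    (hee : ∀ a b, g (eB a) (eB b) = 0)
    (hei : ∀ a b, g (eB a) (iB b) = if a = b then (2 : k)⁻¹ else 0)
    (hspan : Submodule.span k (Set.range iB ∪ Set.range eB) = ⊤)
    -- the spinor representation
    (hdimS : Module.finrank k S = 2 ^ n)
    (ρ : CliffordAlgebra Q ≃ₐ[k] Module.End k S)
    -- a pure spinor annihilated by `I`
    (v0 : S) (hv0ne : v0 ≠ 0)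
    (hv0 : ∀ a, ρ (ι Q (iB a)) v0 = 0)
    -- a nonzero spinor norm
    (B : S →ₗ[k] S →ₗ[k] k) (hBne : B ≠ 0)
    (hB : ∀ (v : V) (φ ψ : S), B (ρ (ι Q v) φ) ψ = B φ (ρ (ι Q v) ψ)) :
    -- the operator `L̃₂` in isotropic coordinates
    letI L : S → S → CliffordAlgebra Q := fun ψ1 ψ2 =>
      (∑ p ∈ Finset.univ.filter (fun p : Fin n × Fin n => p.1 ≠ p.2),
        (B (ρ (ι Q (eB p.1) * ι Q (eB p.2)) ψ1) ψ2) • (ι Q (iB p.1) * ι Q (iB p.2)))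
      + (∑ p ∈ Finset.univ.filter (fun p : Fin n × Fin n => p.1 ≠ p.2),
        (B (ρ (ι Q (iB p.1) * ι Q (iB p.2)) ψ1) ψ2) • (ι Q (eB p.1) * ι Q (eB p.2)))
      + (∑ p ∈ Finset.univ.filter (fun p : Fin n × Fin n => p.1 ≠ p.2),
        (B (ρ (ι Q (eB p.1) * ι Q (iB p.2)) ψ1) ψ2) •
          (ι Q (iB p.1) * ι Q (eB p.2) - ι Q (eB p.2) * ι Q (iB p.1)))
      + (2 : k)⁻¹ • ∑ a : Fin n,
        (B (ρ (ι Q (eB a) * ι Q (iB a) - ι Q (iB a) * ι Q (eB a)) ψ1) ψ2) •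
          (ι Q (iB a) * ι Q (eB a) - ι Q (eB a) * ι Q (iB a))
    ∀ I J K : Finset (Fin n), Disjoint I J → K = (I ∪ J)ᶜ →
      (I.card + J.card + K.card = n) ∧
      (K.card ≠ 0 → K.card ≠ 2 →
        ρ (L (ρ (prodE Q eB I) v0) (ρ (prodE Q eB J) v0)) (ρ (prodE Q eB K) v0) = 0) ∧
      (K = ∅ →
        ρ (L (ρ (prodE Q eB I) v0) (ρ (prodE Q eB J) v0)) (ρ (prodE Q eB K) v0) =
          (B (ρ (prodE Q eB I) v0) (ρ (prodE Q eB J) v0) *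
            ((I.card : k) - (n : k) / 2)) • v0) ∧
      (∀ a b : Fin n, a ≠ b → K = {a, b} →
        ρ (L (ρ (prodE Q eB I) v0) (ρ (prodE Q eB J) v0))
            (ρ (ι Q (eB b) * ι Q (eB a)) v0) =
          (2 * B (ρ (ι Q (eB a) * ι Q (eB b) * prodE Q eB I) v0)
            (ρ (prodE Q eB J) v0)) • v0) := by
  -- basic Clifford relations
  have hpolar : ∀ v w : V, QuadraticMap.polar Q v w = g v w + g w v := by
    intro v w
    simp only [QuadraticMap.polar, hQ, map_add, LinearMap.add_apply]
    ring
  have hEE : ∀ a b, ι Q (eB a) * ι Q (eB b) = -(ι Q (eB b) * ι Q (eB a)) := by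
    intro a b
    have h := CliffordAlgebra.ι_mul_ι_add_swap (Q := Q) (eB a) (eB b)
    rw [hpolar, hee, hee, add_zero, map_zero] at h
    exact eq_neg_of_add_eq_zero_left h
  have hE2 : ∀ a, ι Q (eB a) * ι Q (eB a) = 0 := by
    intro a
    rw [ι_sq_scalar, hQ, hee, map_zero]
  have hhalf : (2:k)⁻¹ + (2:k)⁻¹ = 1 := by
    field_simp
    norm_num
  have hIEalg : ∀ a b, ι Q (iB a) * ι Q (eB b) + ι Q (eB b) * ι Q (iB a)
      = algebraMap k _ (if a = b then (1:k) else 0) := by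
    intro a b
    have h := CliffordAlgebra.ι_mul_ι_add_swap (Q := Q) (iB a) (eB b)
    rw [hpolar] at h
    rw [h]
    congr 1
    rw [hsymm (iB a) (eB b), hei]
    rcases eq_or_ne a b with rfl | hab
    · rw [if_pos rfl, if_pos rfl, hhalf]
    · rw [if_neg (fun h' => hab h'.symm), if_neg hab, add_zero]
  have hIEb : ∀ (a b : Fin n) (x : S), ρ (ι Q (iB a)) (ρ (ι Q (eB b)) x)
      = (if a = b then x else 0) - ρ (ι Q (eB b)) (ρ (ι Q (iB a)) x) := by
    intro a b x
    have h := congrArg ρ (hIEalg a b)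
    rw [map_add, map_mul, map_mul, AlgEquiv.commutes] at h
    have h2 := DFunLike.congr_fun h x
    rw [LinearMap.add_apply, Module.End.mul_apply, Module.End.mul_apply,
      Module.algebraMap_end_apply] at h2
    have h3 : (if a = b then (1:k) else 0) • x = (if a = b then x else 0) := by
      split <;> simp
    rw [h3] at h2
    exact eq_sub_of_add_eq h2
  intro I J K hdisj hKc
  -- membership helpers
  have hKmem : ∀ m : Fin n, m ∈ K ↔ (m ∉ I ∧ m ∉ J) := by
    intro m
    rw [hKc, Finset.mem_compl, Finset.mem_union]
    tauto
  have hJI : ∀ m, m ∈ I → m ∉ J := fun m hm hj => (Finset.disjoint_left.mp hdisj) hm hj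
  have hψI : ρ (prodE Q eB I) v0 = Stmt16Aux.sp Q eB ρ v0 (I.sort (· ≤ ·)) := rfl
  have hψJ : ρ (prodE Q eB J) v0 = Stmt16Aux.sp Q eB ρ v0 (J.sort (· ≤ ·)) := rfl
  -- coefficient vanishing lemmas
  have hC1 : ∀ p q : Fin n, p ≠ q → ({p, q} : Finset (Fin n)) ≠ K →
      B (ρ (ι Q (eB p) * ι Q (eB q)) (ρ (prodE Q eB I) v0)) (ρ (prodE Q eB J) v0) = 0 := by
    intro p q hpq hne
    have hrw : ρ (ι Q (eB p) * ι Q (eB q)) (ρ (prodE Q eB I) v0)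
        = Stmt16Aux.sp Q eB ρ v0 (p :: q :: I.sort (· ≤ ·)) := by
      rw [map_mul, Module.End.mul_apply, Stmt16Aux.sp_cons, Stmt16Aux.sp_cons]
      rfl
    rw [hrw, hψJ]
    by_cases hx : ∃ m ∈ K, m ∉ ({p, q} : Finset (Fin n))
    · obtain ⟨m, hmK, hm⟩ := hx
      have hmI := (hKmem m).mp hmK
      simp only [Finset.mem_insert, Finset.mem_singleton, not_or] at hm
      refine Stmt16Aux.B_sp_missing Q eB iB ρ v0 B hB hv0 hIEb m ?_ ?_
      · simp only [List.mem_cons, Finset.mem_sort, not_or]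
        exact ⟨hm.1, hm.2, hmI.1⟩
      · simp only [Finset.mem_sort]; exact hmI.2
    · push_neg at hx
      have hKsub : K ⊆ {p, q} := fun m hm => hx m hm
      have hxx : ∃ x ∈ ({p, q} : Finset (Fin n)), x ∉ K := by
        by_contra hno
        push_neg at hno
        exact hne (Finset.Subset.antisymm (fun x h => hno x h) hKsub)
      obtain ⟨x, hxpq, hxK⟩ := hxx
      have hxIJ : x ∈ I ∨ x ∈ J := by
        by_contra hcon
        push_neg at hcon
        exact hxK ((hKmem x).mpr hcon)
      apply Stmt16Aux.B_sp_dup Q eB ρ v0 B hB hEE hE2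
      intro hnd
      rw [List.cons_append, List.cons_append, List.nodup_cons, List.nodup_cons] at hnd
      obtain ⟨hp1, hq1, _⟩ := hnd
      simp only [List.mem_cons, List.mem_append, Finset.mem_sort, not_or] at hp1 hq1
      rcases Finset.mem_insert.mp hxpq with rfl | hxq
      · rcases hxIJ with h | h
        · exact hp1.2.1 h
        · exact hp1.2.2 h
      · rw [Finset.mem_singleton] at hxq
        subst hxq
        rcases hxIJ with h | h
        · exact hq1.1 h
        · exact hq1.2 h
  have hC2 : ∀ p q : Fin n,
      B (ρ (ι Q (iB p) * ι Q (iB q)) (ρ (prodE Q eB I) v0)) (ρ (prodE Q eB J) v0) = 0 := by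
    intro p q
    rw [map_mul, Module.End.mul_apply, hψI, hψJ]
    by_cases hq : q ∈ I
    · obtain ⟨c, hc⟩ := Stmt16Aux.i_sp_erase Q eB iB ρ v0 hv0 hIEb
        (Finset.sort_nodup I (fun x1 x2 : Fin n => x1 ≤ x2)) ((Finset.mem_sort _).mpr hq)
      rw [hc, map_smul]
      have hq0 : q ∉ (I.sort (· ≤ ·)).erase q := (Finset.sort_nodup I (fun x1 x2 : Fin n => x1 ≤ x2)).not_mem_erase
      by_cases hp : p ∈ (I.sort (· ≤ ·)).erase q
      · obtain ⟨c', hc'⟩ := Stmt16Aux.i_sp_erase Q eB iB ρ v0 hv0 hIEb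
          ((Finset.sort_nodup I (fun x1 x2 : Fin n => x1 ≤ x2)).erase q) hp
        rw [hc']
        have hq1 : q ∉ ((I.sort (· ≤ ·)).erase q).erase p :=
          fun hmem => hq0 (List.mem_of_mem_erase hmem)
        have hqJ : q ∉ (J.sort (· ≤ ·)) := fun hmem => hJI q hq ((Finset.mem_sort _).mp hmem)
        simp only [map_smul, LinearMap.smul_apply, smul_eq_mul]
        rw [Stmt16Aux.B_sp_missing Q eB iB ρ v0 B hB hv0 hIEb q hq1 hqJ]
        ring
      · rw [Stmt16Aux.i_sp_eq_zero Q eB iB ρ v0 hv0 hIEb hp, smul_zero]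
        simp
    · rw [Stmt16Aux.i_sp_eq_zero Q eB iB ρ v0 hv0 hIEb
        (fun hmem => hq ((Finset.mem_sort _).mp hmem)), map_zero]
      simp
  have hC3 : ∀ p q : Fin n, p ≠ q →
      B (ρ (ι Q (eB p) * ι Q (iB q)) (ρ (prodE Q eB I) v0)) (ρ (prodE Q eB J) v0) = 0 := by
    intro p q hpq
    rw [map_mul, Module.End.mul_apply, hψI, hψJ]
    by_cases hq : q ∈ I
    · obtain ⟨c, hc⟩ := Stmt16Aux.i_sp_erase Q eB iB ρ v0 hv0 hIEb
        (Finset.sort_nodup I (fun x1 x2 : Fin n => x1 ≤ x2)) ((Finset.mem_sort _).mpr hq)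
      rw [hc, map_smul, ← Stmt16Aux.sp_cons]
      have hq0 : q ∉ (I.sort (· ≤ ·)).erase q := (Finset.sort_nodup I (fun x1 x2 : Fin n => x1 ≤ x2)).not_mem_erase
      have hqmem : q ∉ p :: (I.sort (· ≤ ·)).erase q := by
        intro hmem
        rcases List.mem_cons.mp hmem with h | h
        · exact hpq h.symm
        · exact hq0 h
      have hqJ : q ∉ (J.sort (· ≤ ·)) := fun hmem => hJI q hq ((Finset.mem_sort _).mp hmem)
      simp only [map_smul, LinearMap.smul_apply, smul_eq_mul]
      rw [Stmt16Aux.B_sp_missing Q eB iB ρ v0 B hB hv0 hIEb q hqmem hqJ]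
      ring
    · rw [Stmt16Aux.i_sp_eq_zero Q eB iB ρ v0 hv0 hIEb
        (fun hmem => hq ((Finset.mem_sort _).mp hmem)), map_zero]
      simp
  have hBIJ : K ≠ ∅ → B (ρ (prodE Q eB I) v0) (ρ (prodE Q eB J) v0) = 0 := by
    intro hne
    obtain ⟨m, hm⟩ := Finset.nonempty_iff_ne_empty.mpr hne
    have h := (hKmem m).mp hm
    rw [hψI, hψJ]
    exact Stmt16Aux.B_sp_missing Q eB iB ρ v0 B hB hv0 hIEb m
      (fun hmem => h.1 ((Finset.mem_sort _).mp hmem))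
      (fun hmem => h.2 ((Finset.mem_sort _).mp hmem))
  have hEmulI : ∀ a, a ∈ I → ρ (ι Q (eB a)) (ρ (prodE Q eB I) v0) = 0 := by
    intro a ha
    have h0 : ι Q (eB a) * prodE Q eB I = 0 :=
      Stmt16Aux.mem_mul_pl Q eB hEE hE2 ((Finset.mem_sort _).mpr ha)
    rw [← Module.End.mul_apply, ← map_mul, h0, map_zero, LinearMap.zero_apply]
  have hC4 : ∀ a : Fin n,
      B (ρ (ι Q (eB a) * ι Q (iB a) - ι Q (iB a) * ι Q (eB a)) (ρ (prodE Q eB I) v0))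
          (ρ (prodE Q eB J) v0)
        = (if a ∈ I then (1:k) else -1)
            * B (ρ (prodE Q eB I) v0) (ρ (prodE Q eB J) v0) := by
    intro a
    rw [map_sub, map_mul, map_mul, LinearMap.sub_apply, Module.End.mul_apply,
      Module.End.mul_apply]
    by_cases ha : a ∈ I
    · rw [hEmulI a ha, map_zero, sub_zero]
      have h := hIEb a a (ρ (prodE Q eB I) v0)
      rw [if_pos rfl, hEmulI a ha, map_zero] at h
      have h2 : ρ (ι Q (eB a)) (ρ (ι Q (iB a)) (ρ (prodE Q eB I) v0))
          = ρ (prodE Q eB I) v0 := (sub_eq_zero.mp h.symm).symm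
      rw [h2, if_pos ha, one_mul]
    · have hz : ρ (ι Q (iB a)) (ρ (prodE Q eB I) v0) = 0 := by
        rw [hψI]
        exact Stmt16Aux.i_sp_eq_zero Q eB iB ρ v0 hv0 hIEb
          (fun hmem => ha ((Finset.mem_sort _).mp hmem))
      rw [hz, map_zero, zero_sub]
      have h := hIEb a a (ρ (prodE Q eB I) v0)
      rw [if_pos rfl, hz, map_zero, sub_zero] at h
      rw [h, if_neg ha, map_neg, LinearMap.neg_apply, neg_one_mul]
  -- sum-vanishing lemmas (K-independent)
  have hS2 : ∀ p ∈ Finset.univ.filter (fun p : Fin n × Fin n => p.1 ≠ p.2),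
      (B (ρ (ι Q (iB p.1) * ι Q (iB p.2)) (ρ (prodE Q eB I) v0)) (ρ (prodE Q eB J) v0))
        • (ι Q (eB p.1) * ι Q (eB p.2)) = 0 := by
    intro p _
    rw [hC2 p.1 p.2, zero_smul]
  have hS3 : ∀ p ∈ Finset.univ.filter (fun p : Fin n × Fin n => p.1 ≠ p.2),
      (B (ρ (ι Q (eB p.1) * ι Q (iB p.2)) (ρ (prodE Q eB I) v0)) (ρ (prodE Q eB J) v0))
        • (ι Q (iB p.1) * ι Q (eB p.2) - ι Q (eB p.2) * ι Q (iB p.1)) = 0 := by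
    intro p hp
    rw [Finset.mem_filter] at hp
    rw [hC3 p.1 p.2 hp.2, zero_smul]
  have hS4 : K ≠ ∅ → ∀ a ∈ (Finset.univ : Finset (Fin n)),
      (B (ρ (ι Q (eB a) * ι Q (iB a) - ι Q (iB a) * ι Q (eB a)) (ρ (prodE Q eB I) v0))
        (ρ (prodE Q eB J) v0))
        • (ι Q (iB a) * ι Q (eB a) - ι Q (eB a) * ι Q (iB a)) = 0 := by
    intro hne a _
    rw [hC4 a, hBIJ hne, mul_zero, zero_smul]
  refine ⟨?_, ?_, ?_, ?_⟩
  · -- cardinalities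
    have h1 : (I ∪ J).card = I.card + J.card := Finset.card_union_of_disjoint hdisj
    have h2 : K.card = n - (I ∪ J).card := by
      rw [hKc, Finset.card_compl, Fintype.card_fin]
    have h3 : (I ∪ J).card ≤ n := by
      have := Finset.card_le_univ (I ∪ J)
      simpa using this
    omega
  · -- case (i)
    intro hc0 hc2
    have hKne : K ≠ ∅ := fun h => hc0 (by rw [h, Finset.card_empty])
    have hS1 : ∀ p ∈ Finset.univ.filter (fun p : Fin n × Fin n => p.1 ≠ p.2),
        (B (ρ (ι Q (eB p.1) * ι Q (eB p.2)) (ρ (prodE Q eB I) v0)) (ρ (prodE Q eB J) v0))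
          • (ι Q (iB p.1) * ι Q (iB p.2)) = 0 := by
      intro p hp
      rw [Finset.mem_filter] at hp
      rw [hC1 p.1 p.2 hp.2 (fun h => hc2 (by rw [← h, Finset.card_pair hp.2])), zero_smul]
    beta_reduce
    rw [Finset.sum_eq_zero hS1, Finset.sum_eq_zero hS2, Finset.sum_eq_zero hS3,
      Finset.sum_eq_zero (hS4 hKne), smul_zero, add_zero, add_zero, add_zero, map_zero,
      LinearMap.zero_apply]
  · -- case (ii)
    intro hKe
    have hS1 : ∀ p ∈ Finset.univ.filter (fun p : Fin n × Fin n => p.1 ≠ p.2),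
        (B (ρ (ι Q (eB p.1) * ι Q (eB p.2)) (ρ (prodE Q eB I) v0)) (ρ (prodE Q eB J) v0))
          • (ι Q (iB p.1) * ι Q (iB p.2)) = 0 := by
      intro p hp
      rw [Finset.mem_filter] at hp
      refine (hC1 p.1 p.2 hp.2 ?_).symm ▸ zero_smul k _
      rw [hKe]
      exact Finset.insert_ne_empty _ _
    have hKv : ρ (prodE Q eB K) v0 = v0 := by
      rw [hKe]
      have : prodE Q eB (∅ : Finset (Fin n)) = 1 := by
        simp [prodE]
      rw [this, map_one, Module.End.one_apply]
    have hop : ∀ a : Fin n,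
        ρ (ι Q (iB a) * ι Q (eB a) - ι Q (eB a) * ι Q (iB a)) v0 = v0 := by
      intro a
      rw [map_sub, map_mul, map_mul, LinearMap.sub_apply, Module.End.mul_apply,
        Module.End.mul_apply, hv0, map_zero, sub_zero, hIEb, if_pos rfl, hv0, map_zero,
        sub_zero]
    beta_reduce
    rw [Finset.sum_eq_zero hS1, Finset.sum_eq_zero hS2, Finset.sum_eq_zero hS3,
      zero_add, zero_add, zero_add, hKv]
    rw [map_smul, LinearMap.smul_apply, map_sum, LinearMap.sum_apply]
    have hterm : ∀ a ∈ (Finset.univ : Finset (Fin n)),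
        ρ ((B (ρ (ι Q (eB a) * ι Q (iB a) - ι Q (iB a) * ι Q (eB a)) (ρ (prodE Q eB I) v0))
            (ρ (prodE Q eB J) v0))
          • (ι Q (iB a) * ι Q (eB a) - ι Q (eB a) * ι Q (iB a))) v0
        = ((if a ∈ I then (1:k) else -1)
            * B (ρ (prodE Q eB I) v0) (ρ (prodE Q eB J) v0)) • v0 := by
      intro a _
      rw [map_smul, LinearMap.smul_apply, hop a, hC4 a]
    rw [Finset.sum_congr rfl hterm]
    have hkey : ∑ a : Fin n, ((if a ∈ I then (1:k) else -1)
            * B (ρ (prodE Q eB I) v0) (ρ (prodE Q eB J) v0)) • v0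
        = ((2 * (I.card : k) - (n : k))
            * B (ρ (prodE Q eB I) v0) (ρ (prodE Q eB J) v0)) • v0 := by
      have h1 : ∀ a : Fin n, ((if a ∈ I then (1:k) else -1)
            * B (ρ (prodE Q eB I) v0) (ρ (prodE Q eB J) v0)) • v0
          = (if a ∈ I then ((2:k) * B (ρ (prodE Q eB I) v0) (ρ (prodE Q eB J) v0)) • v0
              else 0)
            + ((-1 : k) * B (ρ (prodE Q eB I) v0) (ρ (prodE Q eB J) v0)) • v0 := by
        intro a
        by_cases h : a ∈ I
        · rw [if_pos h, if_pos h, ← add_smul]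
          congr 1
          ring
        · rw [if_neg h, if_neg h, zero_add]
      simp_rw [h1]
      rw [Finset.sum_add_distrib, Finset.sum_ite_mem, Finset.univ_inter, Finset.sum_const,
        Finset.sum_const, Finset.card_univ, Fintype.card_fin,
        ← Nat.cast_smul_eq_nsmul k, ← Nat.cast_smul_eq_nsmul k, smul_smul, smul_smul,
        ← add_smul]
      congr 1
      push_cast
      ring
    rw [hkey, smul_smul]
    congr 1
    field_simp
  · -- case (iii)
    intro a b hab hKab
    have hKne : K ≠ ∅ := by
      rw [hKab]
      exact Finset.insert_ne_empty _ _
    have hsub : ({(a, b), (b, a)} : Finset (Fin n × Fin n))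
        ⊆ Finset.univ.filter (fun p : Fin n × Fin n => p.1 ≠ p.2) := by
      intro x hx
      simp only [Finset.mem_insert, Finset.mem_singleton] at hx
      rcases hx with rfl | rfl
      · simp [Finset.mem_filter, hab]
      · simp [Finset.mem_filter, hab.symm]
    have hS1 : ∑ p ∈ Finset.univ.filter (fun p : Fin n × Fin n => p.1 ≠ p.2),
        (B (ρ (ι Q (eB p.1) * ι Q (eB p.2)) (ρ (prodE Q eB I) v0)) (ρ (prodE Q eB J) v0))
          • (ι Q (iB p.1) * ι Q (iB p.2))
        = ∑ p ∈ ({(a, b), (b, a)} : Finset (Fin n × Fin n)),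
        (B (ρ (ι Q (eB p.1) * ι Q (eB p.2)) (ρ (prodE Q eB I) v0)) (ρ (prodE Q eB J) v0))
          • (ι Q (iB p.1) * ι Q (iB p.2)) := by
      refine (Finset.sum_subset hsub ?_).symm
      intro x hx hnx
      rw [Finset.mem_filter] at hx
      have hxne := hx.2
      have hKx : ({x.1, x.2} : Finset (Fin n)) ≠ K := by
        intro heq
        rw [hKab] at heq
        have h1 : x.1 ∈ ({a, b} : Finset (Fin n)) := by
          rw [← heq]; exact Finset.mem_insert_self _ _
        have h2 : x.2 ∈ ({a, b} : Finset (Fin n)) := by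
          rw [← heq]; simp
        simp only [Finset.mem_insert, Finset.mem_singleton] at h1 h2
        apply hnx
        simp only [Finset.mem_insert, Finset.mem_singleton]
        rcases h1 with h1 | h1 <;> rcases h2 with h2 | h2
        · exact absurd (h1.trans h2.symm) hxne
        · left; exact Prod.ext h1 h2
        · right; exact Prod.ext h1 h2
        · exact absurd (h1.trans h2.symm) hxne
      rw [hC1 x.1 x.2 hxne hKx, zero_smul]
    beta_reduce
    rw [hS1, Finset.sum_eq_zero hS2, Finset.sum_eq_zero hS3,
      Finset.sum_eq_zero (hS4 hKne), smul_zero, add_zero, add_zero, add_zero]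
    rw [Finset.sum_pair (by
      intro h
      exact hab (congrArg Prod.fst h))]
    rw [map_add, LinearMap.add_apply, map_smul, map_smul, LinearMap.smul_apply,
      LinearMap.smul_apply]
    have hXexp : ρ (ι Q (eB b) * ι Q (eB a)) v0
        = ρ (ι Q (eB b)) (ρ (ι Q (eB a)) v0) := by
      rw [map_mul, Module.End.mul_apply]
    have hib : ρ (ι Q (iB b)) (ρ (ι Q (eB b) * ι Q (eB a)) v0) = ρ (ι Q (eB a)) v0 := by
      rw [hXexp, hIEb b b, if_pos rfl, hIEb b a, if_neg (fun h => hab h.symm), hv0]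
      simp
    have hXab : ρ (ι Q (iB a) * ι Q (iB b)) (ρ (ι Q (eB b) * ι Q (eB a)) v0) = v0 := by
      rw [map_mul, Module.End.mul_apply, hib, hIEb a a, if_pos rfl, hv0]
      simp
    have hia : ρ (ι Q (iB a)) (ρ (ι Q (eB b) * ι Q (eB a)) v0)
        = -ρ (ι Q (eB b)) v0 := by
      rw [hXexp, hIEb a b, if_neg hab, hIEb a a, if_pos rfl, hv0]
      simp
    have hXba : ρ (ι Q (iB b) * ι Q (iB a)) (ρ (ι Q (eB b) * ι Q (eB a)) v0) = -v0 := by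
      rw [map_mul, Module.End.mul_apply, hia, map_neg, hIEb b b, if_pos rfl, hv0]
      simp
    rw [hXab, hXba]
    have hcoef : B (ρ (ι Q (eB b) * ι Q (eB a)) (ρ (prodE Q eB I) v0)) (ρ (prodE Q eB J) v0)
        = - B (ρ (ι Q (eB a) * ι Q (eB b)) (ρ (prodE Q eB I) v0)) (ρ (prodE Q eB J) v0) := by
      rw [hEE b a, map_neg, LinearMap.neg_apply, map_neg, LinearMap.neg_apply]
    rw [hcoef, smul_neg, neg_smul, neg_neg]
    have hc1' : ρ (ι Q (eB a) * ι Q (eB b) * prodE Q eB I) v0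
        = ρ (ι Q (eB a) * ι Q (eB b)) (ρ (prodE Q eB I) v0) := by
      rw [map_mul, Module.End.mul_apply]
    rw [hc1', ← add_smul, ← two_mul]
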